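/- arXiv:2311.11942 — 3 statements merged into one kernel-verified Lean document; each statement's English description precedes it below -/
import Mathlib

section
/- Let m, n ≥ 1 be integers and let I₁ ≠ I₂ be two admissible subsets of {1, …, m+n}. Then there exists θ > 0 such that for every s ∈ A⁺_{I₁} and every t ∈ A⁺_{I₂}, at least one of the following holds: (a) there exist i ∈ I₁ ∩ {1, …, m} and j ∈ I₁ ∩ {m+1, …, m+n} such that (s_i + s_j) − (t_i + t_j) ≥ θ · min(⌊s⌋_{I₁}, ⌊t⌋_{I₂}); or (b) there exist i ∈ I₂ ∩ {1, …, m} and j ∈ I₂ ∩ {m+1, …, m+n} such that (t_i + t_j) − (s_i + s_j) ≥ θ · min(⌊s⌋_{I₁}, ⌊t⌋_{I₂}). -/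
private lemma wp_theta_bound (Nr b c d : ℝ) (hN : 2 ≤ Nr) (hb : 1 ≤ b) (hc : 1 ≤ c)
    (hd : 1 ≤ d) (hcd : c + d ≤ Nr) (hbN : b ≤ Nr) :
    (1 / Nr ^ 2) * (((c + d) * b) + c * d) ≤ (c + d) * b := by
  have hN0 : (0:ℝ) < Nr ^ 2 := by positivity
  rw [div_mul_eq_mul_div, one_mul, div_le_iff₀ hN0]
  have key : c * d ≤ (c + d) * b * (Nr ^ 2 - 1) := by
    nlinarith [sq_nonneg (c - d),
      mul_le_mul hcd hcd (by linarith : (0:ℝ) ≤ c + d) (by linarith),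
      mul_nonneg (mul_nonneg (show (0:ℝ) ≤ b - 1 by linarith)
        (show (0:ℝ) ≤ c + d by linarith)) (show (0:ℝ) ≤ Nr by linarith),
      mul_nonneg (mul_nonneg (show (0:ℝ) ≤ c + d by linarith)
        (show (0:ℝ) ≤ b by linarith))
        (show (0:ℝ) ≤ 4 * Nr ^ 2 - Nr - 4 by nlinarith [sq_nonneg (Nr - 2)])]
  linarith [key]

private lemma wp_core {ι : Type*} (A B C D : Finset ι) (s t : ι → ℝ) (k : ι)
    (μ θ S T : ℝ) (hμ : 0 ≤ μ)
    (hB : B.Nonempty) (hC : C.Nonempty) (hD : D.Nonempty)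
    (hsB : ∑ j ∈ B, s j = S)
    (htB : ∑ j ∈ B, t j ≤ T)
    (htC : ∑ i ∈ C, t i = T)
    (htD : ∑ j ∈ D, t j = T)
    (hsC : ∑ i ∈ C, s i ≤ S)
    (hsD : ∑ j ∈ D, s j ≤ S)
    (hkA : k ∈ A) (hsk : μ ≤ s k) (htk : t k = 0)
    (hAB : ∀ i ∈ A, ∀ j ∈ B, (s i + s j) - (t i + t j) < θ * μ)
    (hCD : ∀ i ∈ C, ∀ j ∈ D, (t i + t j) - (s i + s j) < θ * μ)
    (hθ : θ * ((((C.card : ℝ) + D.card) * B.card) + (C.card : ℝ) * D.card)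
        ≤ ((C.card : ℝ) + D.card) * B.card) :
    False := by
  have hb1 : (1:ℝ) ≤ B.card := by exact_mod_cast Finset.card_pos.mpr hB
  have hc1 : (1:ℝ) ≤ C.card := by exact_mod_cast Finset.card_pos.mpr hC
  have hd1 : (1:ℝ) ≤ D.card := by exact_mod_cast Finset.card_pos.mpr hD
  have h1 : (B.card:ℝ) * μ + S - T < (B.card:ℝ) * (θ * μ) := by
    have h := Finset.sum_lt_sum_of_nonempty hB (fun j hj => hAB k hkA j hj)
    rw [Finset.sum_const, nsmul_eq_mul] at h
    have e : ∑ j ∈ B, ((s k + s j) - (t k + t j))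
        = (B.card:ℝ) * s k + (∑ j ∈ B, s j) - ((B.card:ℝ) * t k + ∑ j ∈ B, t j) := by
      rw [Finset.sum_sub_distrib, Finset.sum_add_distrib, Finset.sum_add_distrib,
        Finset.sum_const, nsmul_eq_mul, Finset.sum_const, nsmul_eq_mul]
    rw [e, hsB, htk] at h
    have hbk : (B.card:ℝ) * μ ≤ (B.card:ℝ) * s k :=
      mul_le_mul_of_nonneg_left hsk (by linarith)
    linarith
  have h2 : ∀ i ∈ C, (D.card:ℝ) * t i + T - ((D.card:ℝ) * s i + ∑ j ∈ D, s j)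
      < (D.card:ℝ) * (θ * μ) := by
    intro i hi
    have h := Finset.sum_lt_sum_of_nonempty hD (fun j hj => hCD i hi j hj)
    rw [Finset.sum_const, nsmul_eq_mul] at h
    have e : ∑ j ∈ D, ((t i + t j) - (s i + s j))
        = (D.card:ℝ) * t i + (∑ j ∈ D, t j) - ((D.card:ℝ) * s i + ∑ j ∈ D, s j) := by
      rw [Finset.sum_sub_distrib, Finset.sum_add_distrib, Finset.sum_add_distrib,
        Finset.sum_const, nsmul_eq_mul, Finset.sum_const, nsmul_eq_mul]
    rw [e, htD] at h
    linarith
  have h2' := Finset.sum_lt_sum_of_nonempty hC h2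
  rw [Finset.sum_const, nsmul_eq_mul] at h2'
  have e2 : ∑ i ∈ C, ((D.card:ℝ) * t i + T - ((D.card:ℝ) * s i + ∑ j ∈ D, s j))
      = (D.card:ℝ) * (∑ i ∈ C, t i) + (C.card:ℝ) * T
        - ((D.card:ℝ) * (∑ i ∈ C, s i) + (C.card:ℝ) * (∑ j ∈ D, s j)) := by
    simp only [Finset.sum_sub_distrib, Finset.sum_add_distrib, Finset.sum_const,
      nsmul_eq_mul, ← Finset.mul_sum]
  rw [e2, htC] at h2'
  have e3 : (D.card:ℝ) * (∑ i ∈ C, s i) ≤ (D.card:ℝ) * S :=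
    mul_le_mul_of_nonneg_left hsC (by linarith)
  have e4 : (C.card:ℝ) * (∑ j ∈ D, s j) ≤ (C.card:ℝ) * S :=
    mul_le_mul_of_nonneg_left hsD (by linarith)
  have h2'' : (C.card:ℝ) * T + (D.card:ℝ) * T - (C.card:ℝ) * S - (D.card:ℝ) * S
      < (C.card:ℝ) * ((D.card:ℝ) * (θ * μ)) := by linarith
  have h1'' := mul_lt_mul_of_pos_left h1
    (show (0:ℝ) < (C.card:ℝ) + D.card by linarith)
  have hθμ := mul_le_mul_of_nonneg_right hθ hμ
  nlinarith [h1'', h2'', hθμ]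

private lemma wp_sum_inter {ι : Type*} [DecidableEq ι] (I F : Finset ι) (u : ι → ℝ)
    (hu : ∀ i, i ∉ I → u i = 0) : ∑ i ∈ I ∩ F, u i = ∑ i ∈ F, u i :=
  Finset.sum_subset Finset.inter_subset_right
    (fun x hx hnx => hu x (fun hxI => hnx (Finset.mem_inter.mpr ⟨hxI, hx⟩)))

private lemma wp_sum_inter_le {ι : Type*} [DecidableEq ι] (I F : Finset ι) (u : ι → ℝ)
    (hu : ∀ i, 0 ≤ u i) : ∑ i ∈ I ∩ F, u i ≤ ∑ i ∈ F, u i :=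
  Finset.sum_le_sum_of_subset_of_nonneg Finset.inter_subset_right (fun i _ _ => hu i)


/-- Proposition about weights: for two distinct admissible subsets `I₁ ≠ I₂` of
`{1,…,m+n}` there is `θ > 0` such that for all `s ∈ A⁺_{I₁}` and `t ∈ A⁺_{I₂}`,
some weight mixing for `I₁` satisfies `α(s-t) ≥ θ·min(⌊s⌋_{I₁}, ⌊t⌋_{I₂})`, or
some weight mixing for `I₂` satisfies `α(t-s) ≥ θ·min(⌊s⌋_{I₁}, ⌊t⌋_{I₂})`. -/
theorem weights_proposition (m n : ℕ) (hm : 1 ≤ m) (hn : 1 ≤ n)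
    (I₁ I₂ : Finset (Fin (m + n)))
    (h₁ : (∃ i ∈ I₁, (i : ℕ) < m) ∧ (∃ j ∈ I₁, m ≤ (j : ℕ)))
    (h₂ : (∃ i ∈ I₂, (i : ℕ) < m) ∧ (∃ j ∈ I₂, m ≤ (j : ℕ)))
    (hne : I₁ ≠ I₂) :
    ∃ θ : ℝ, 0 < θ ∧
      ∀ s t : Fin (m + n) → ℝ,
        (∀ i, 0 ≤ s i) →
        (∑ i ∈ Finset.univ.filter (fun i : Fin (m + n) => (i : ℕ) < m), s i =
          ∑ i ∈ Finset.univ.filter (fun i : Fin (m + n) => m ≤ (i : ℕ)), s i) →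
        (∀ i, i ∉ I₁ → s i = 0) →
        (∀ i, 0 ≤ t i) →
        (∑ i ∈ Finset.univ.filter (fun i : Fin (m + n) => (i : ℕ) < m), t i =
          ∑ i ∈ Finset.univ.filter (fun i : Fin (m + n) => m ≤ (i : ℕ)), t i) →
        (∀ i, i ∉ I₂ → t i = 0) →
        (∃ i ∈ I₁, ∃ j ∈ I₁, (i : ℕ) < m ∧ m ≤ (j : ℕ) ∧
            θ * min (I₁.inf' (h₁.1.imp fun _ hi => hi.1) s)
                    (I₂.inf' (h₂.1.imp fun _ hi => hi.1) t)
              ≤ (s i + s j) - (t i + t j)) ∨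
        (∃ i ∈ I₂, ∃ j ∈ I₂, (i : ℕ) < m ∧ m ≤ (j : ℕ) ∧
            θ * min (I₁.inf' (h₁.1.imp fun _ hi => hi.1) s)
                    (I₂.inf' (h₂.1.imp fun _ hi => hi.1) t)
              ≤ (t i + t j) - (s i + s j)) := by

  classical
  refine ⟨1 / ((m : ℝ) + n) ^ 2, by positivity, ?_⟩
  intro s t hs hsbal hs0 ht htbal ht0
  by_contra hcon
  push_neg at hcon
  obtain ⟨hp₁, hp₂⟩ := hcon
  set L := Finset.univ.filter (fun i : Fin (m + n) => (i : ℕ) < m) with hLdef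
  set R := Finset.univ.filter (fun i : Fin (m + n) => m ≤ (i : ℕ)) with hRdef
  set μ := min (I₁.inf' (h₁.1.imp fun _ hi => hi.1) s)
               (I₂.inf' (h₂.1.imp fun _ hi => hi.1) t) with hμdef
  set θ := 1 / ((m : ℝ) + n) ^ 2 with hθdef
  have memL : ∀ i : Fin (m + n), i ∈ L ↔ (i : ℕ) < m := fun i => by simp [hLdef]
  have memR : ∀ i : Fin (m + n), i ∈ R ↔ m ≤ (i : ℕ) := fun i => by simp [hRdef]
  -- nonemptiness
  have hA1 : (I₁ ∩ L).Nonempty := by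
    obtain ⟨i, hi, him⟩ := h₁.1
    exact ⟨i, Finset.mem_inter.mpr ⟨hi, (memL i).mpr him⟩⟩
  have hB1 : (I₁ ∩ R).Nonempty := by
    obtain ⟨i, hi, him⟩ := h₁.2
    exact ⟨i, Finset.mem_inter.mpr ⟨hi, (memR i).mpr him⟩⟩
  have hA2 : (I₂ ∩ L).Nonempty := by
    obtain ⟨i, hi, him⟩ := h₂.1
    exact ⟨i, Finset.mem_inter.mpr ⟨hi, (memL i).mpr him⟩⟩
  have hB2 : (I₂ ∩ R).Nonempty := by
    obtain ⟨i, hi, him⟩ := h₂.2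
    exact ⟨i, Finset.mem_inter.mpr ⟨hi, (memR i).mpr him⟩⟩
  -- sums
  have hsL : ∑ i ∈ I₁ ∩ L, s i = ∑ i ∈ L, s i := wp_sum_inter I₁ L s hs0
  have hsR : ∑ i ∈ I₁ ∩ R, s i = ∑ i ∈ L, s i :=
    (wp_sum_inter I₁ R s hs0).trans hsbal.symm
  have htL : ∑ i ∈ I₂ ∩ L, t i = ∑ i ∈ L, t i := wp_sum_inter I₂ L t ht0
  have htR : ∑ i ∈ I₂ ∩ R, t i = ∑ i ∈ L, t i :=
    (wp_sum_inter I₂ R t ht0).trans htbal.symm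
  have hsA2 : ∑ i ∈ I₂ ∩ L, s i ≤ ∑ i ∈ L, s i := wp_sum_inter_le I₂ L s hs
  have hsB2 : ∑ i ∈ I₂ ∩ R, s i ≤ ∑ i ∈ L, s i :=
    (wp_sum_inter_le I₂ R s hs).trans hsbal.symm.le
  have htA1 : ∑ i ∈ I₁ ∩ L, t i ≤ ∑ i ∈ L, t i := wp_sum_inter_le I₁ L t ht
  have htB1 : ∑ i ∈ I₁ ∩ R, t i ≤ ∑ i ∈ L, t i :=
    (wp_sum_inter_le I₁ R t ht).trans htbal.symm.le
  -- μ facts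
  have hμ0 : 0 ≤ μ :=
    le_min (Finset.le_inf' _ _ fun i _ => hs i) (Finset.le_inf' _ _ fun i _ => ht i)
  have hμs : ∀ k ∈ I₁, μ ≤ s k := fun k hk =>
    (min_le_left _ _).trans (Finset.inf'_le _ hk)
  have hμt : ∀ k ∈ I₂, μ ≤ t k := fun k hk =>
    (min_le_right _ _).trans (Finset.inf'_le _ hk)
  -- theta bound helper
  have cardle : ∀ X : Finset (Fin (m + n)), ((X.card : ℝ)) ≤ (m : ℝ) + n := by
    intro X
    have h : X.card ≤ m + n := le_trans (Finset.card_le_univ X) (by simp)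
    exact_mod_cast h
  have hLR : Disjoint L R := by
    rw [Finset.disjoint_left]
    intro a haL haR
    rw [memL] at haL
    rw [memR] at haR
    omega
  have cardsum : ∀ I : Finset (Fin (m + n)), (I ∩ L).card + (I ∩ R).card ≤ m + n := by
    intro I
    rw [← Finset.card_union_of_disjoint
        (hLR.mono Finset.inter_subset_right Finset.inter_subset_right)]
    exact le_trans (Finset.card_le_univ _) (by simp)
  have hθb : ∀ bs cs ds : Finset (Fin (m + n)), bs.Nonempty → cs.Nonempty →
      ds.Nonempty → cs.card + ds.card ≤ m + n →
      θ * ((((cs.card : ℝ) + ds.card) * bs.card) + (cs.card : ℝ) * ds.card)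
        ≤ ((cs.card : ℝ) + ds.card) * bs.card := by
    intro bs cs ds hb hc hd hcd
    rw [hθdef]
    apply wp_theta_bound
    · exact_mod_cast Nat.add_le_add hm hn
    · exact_mod_cast Finset.card_pos.mpr hb
    · exact_mod_cast Finset.card_pos.mpr hc
    · exact_mod_cast Finset.card_pos.mpr hd
    · exact_mod_cast hcd
    · exact cardle bs
  -- a point in the symmetric difference
  have hkex : ∃ k, (k ∈ I₁ ∧ k ∉ I₂) ∨ (k ∈ I₂ ∧ k ∉ I₁) := by
    by_contra hkk
    apply hne
    ext x
    constructor <;> intro hx <;> by_contra hx2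
    · exact hkk ⟨x, Or.inl ⟨hx, hx2⟩⟩
    · exact hkk ⟨x, Or.inr ⟨hx, hx2⟩⟩
  obtain ⟨k, hk⟩ := hkex
  rcases hk with ⟨hk1, hk2⟩ | ⟨hk2, hk1⟩
  · -- k ∈ I₁ \ I₂
    have htk : t k = 0 := ht0 k hk2
    have hsk : μ ≤ s k := hμs k hk1
    rcases lt_or_ge (k : ℕ) m with hkm | hkm
    · refine wp_core (I₁ ∩ L) (I₁ ∩ R) (I₂ ∩ L) (I₂ ∩ R) s t k μ θ
        (∑ i ∈ L, s i) (∑ i ∈ L, t i) hμ0 hB1 hA2 hB2 hsR htB1 htL htR hsA2 hsB2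
        (Finset.mem_inter.mpr ⟨hk1, (memL k).mpr hkm⟩) hsk htk ?_ ?_
        (hθb _ _ _ hB1 hA2 hB2 (cardsum I₂))
      · intro i hi j hj
        obtain ⟨hiI, hiL⟩ := Finset.mem_inter.mp hi
        obtain ⟨hjI, hjR⟩ := Finset.mem_inter.mp hj
        exact hp₁ i hiI j hjI ((memL i).mp hiL) ((memR j).mp hjR)
      · intro i hi j hj
        obtain ⟨hiI, hiL⟩ := Finset.mem_inter.mp hi
        obtain ⟨hjI, hjR⟩ := Finset.mem_inter.mp hj
        exact hp₂ i hiI j hjI ((memL i).mp hiL) ((memR j).mp hjR)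
    · refine wp_core (I₁ ∩ R) (I₁ ∩ L) (I₂ ∩ R) (I₂ ∩ L) s t k μ θ
        (∑ i ∈ L, s i) (∑ i ∈ L, t i) hμ0 hA1 hB2 hA2 hsL htA1 htR htL hsB2 hsA2
        (Finset.mem_inter.mpr ⟨hk1, (memR k).mpr hkm⟩) hsk htk ?_ ?_
        ?_
      · intro i hi j hj
        obtain ⟨hiI, hiR⟩ := Finset.mem_inter.mp hi
        obtain ⟨hjI, hjL⟩ := Finset.mem_inter.mp hj
        have := hp₁ j hjI i hiI ((memL j).mp hjL) ((memR i).mp hiR)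
        linarith
      · intro i hi j hj
        obtain ⟨hiI, hiR⟩ := Finset.mem_inter.mp hi
        obtain ⟨hjI, hjL⟩ := Finset.mem_inter.mp hj
        have := hp₂ j hjI i hiI ((memL j).mp hjL) ((memR i).mp hiR)
        linarith
      · have h := cardsum I₂
        exact hθb (I₁ ∩ L) (I₂ ∩ R) (I₂ ∩ L) hA1 hB2 hA2 (by omega)
  · -- k ∈ I₂ \ I₁
    have htk : s k = 0 := hs0 k hk1
    have hsk : μ ≤ t k := hμt k hk2
    rcases lt_or_ge (k : ℕ) m with hkm | hkm
    · refine wp_core (I₂ ∩ L) (I₂ ∩ R) (I₁ ∩ L) (I₁ ∩ R) t s k μ θ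
        (∑ i ∈ L, t i) (∑ i ∈ L, s i) hμ0 hB2 hA1 hB1 htR hsB2 hsL hsR htA1 htB1
        (Finset.mem_inter.mpr ⟨hk2, (memL k).mpr hkm⟩) hsk htk ?_ ?_
        (hθb _ _ _ hB2 hA1 hB1 (cardsum I₁))
      · intro i hi j hj
        obtain ⟨hiI, hiL⟩ := Finset.mem_inter.mp hi
        obtain ⟨hjI, hjR⟩ := Finset.mem_inter.mp hj
        exact hp₂ i hiI j hjI ((memL i).mp hiL) ((memR j).mp hjR)
      · intro i hi j hj
        obtain ⟨hiI, hiL⟩ := Finset.mem_inter.mp hi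
        obtain ⟨hjI, hjR⟩ := Finset.mem_inter.mp hj
        exact hp₁ i hiI j hjI ((memL i).mp hiL) ((memR j).mp hjR)
    · refine wp_core (I₂ ∩ R) (I₂ ∩ L) (I₁ ∩ R) (I₁ ∩ L) t s k μ θ
        (∑ i ∈ L, t i) (∑ i ∈ L, s i) hμ0 hA2 hB1 hA1 htL hsA2 hsR hsL htB1 htA1
        (Finset.mem_inter.mpr ⟨hk2, (memR k).mpr hkm⟩) hsk htk ?_ ?_ ?_
      · intro i hi j hj
        obtain ⟨hiI, hiR⟩ := Finset.mem_inter.mp hi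
        obtain ⟨hjI, hjL⟩ := Finset.mem_inter.mp hj
        have := hp₂ j hjI i hiI ((memL j).mp hjL) ((memR i).mp hiR)
        linarith
      · intro i hi j hj
        obtain ⟨hiI, hiR⟩ := Finset.mem_inter.mp hi
        obtain ⟨hjI, hjL⟩ := Finset.mem_inter.mp hj
        have := hp₁ j hjI i hiI ((memL j).mp hjL) ((memR i).mp hiR)
        linarith
      · have h := cardsum I₁
        exact hθb (I₂ ∩ L) (I₁ ∩ R) (I₁ ∩ L) hA2 hB1 hA1 (by omega)
end

section
/- Let d ≥ 1 and let ℓ be an integer with 2ℓ ≥ d + 1. Then there exists a constant c > 0 (depending only on d and ℓ) such that for every L > 0 and every C ≥ 1, ∫_{ℝ^d} max(1, ‖x‖)^{−2ℓ} · ω(π L x₁) dx ≤ c (C⁻¹ + C² L⁻²), where x₁ denotes the first coordinate of x. Consequently, taking C = L^{2/3}, there is a constant c′ > 0 such that for all L ≥ 1 the integral is at most c′ L^{−2/3}. -/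
/-- The Fejér-type kernel `ω(t) = sin²(t)/t²` for `t ≠ 0`, `ω(0) = 1`. -/
noncomputable def fejerKernel (t : ℝ) : ℝ :=
  if t = 0 then 1 else Real.sin t ^ 2 / t ^ 2

open MeasureTheory Set

lemma fejerKernel_nonneg (t : ℝ) : 0 ≤ fejerKernel t := by
  unfold fejerKernel; split <;> positivity

lemma fejerKernel_le_one (t : ℝ) : fejerKernel t ≤ 1 := by
  unfold fejerKernel
  split
  · exact le_refl 1
  · rename_i h
    have ht : (0:ℝ) < t ^ 2 := by rw [← sq_abs]; exact pow_pos (abs_pos.mpr h) 2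
    rw [div_le_one ht]
    exact (Real.sin_sq_lt_sq h).le

lemma fejerKernel_le_inv_sq {t : ℝ} (h : t ≠ 0) : fejerKernel t ≤ 1 / t ^ 2 := by
  unfold fejerKernel
  rw [if_neg h]
  have ht : (0:ℝ) < t ^ 2 := by rw [← sq_abs]; exact pow_pos (abs_pos.mpr h) 2
  gcongr
  exact Real.sin_sq_le_one t

lemma integrable_max_one_abs_rpow {p : ℝ} (hp : 1 < p) :
    Integrable (fun t : ℝ => (max 1 |t|) ^ (-p)) := by
  set g : ℝ → ℝ := fun t => (max 1 |t|) ^ (-p) with hg_def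
  have hg_cont : Continuous g := by
    apply Continuous.rpow_const (continuous_const.max continuous_abs)
    intro t
    exact Or.inl (by positivity)
  have hIoi : IntegrableOn g (Ioi 0) := by
    have h1 : IntegrableOn g (Ioc 0 1) :=
      (hg_cont.integrableOn_Icc (a := 0) (b := 1)).mono_set Ioc_subset_Icc_self
    have h2 : IntegrableOn g (Ioi 1) := by
      have h := integrableOn_Ioi_rpow_of_lt (a := -p) (by linarith) (c := (1:ℝ)) one_pos
      apply h.congr_fun ?_ measurableSet_Ioi
      intro t ht
      simp only [hg_def]
      rw [abs_of_pos (lt_trans one_pos ht), max_eq_right (le_of_lt ht)]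
    have h3 := h1.union h2
    rwa [Ioc_union_Ioi_eq_Ioi zero_le_one] at h3
  have hIic : IntegrableOn g (Iic 0) := by
    rw [← Measure.map_neg_eq_self (volume : Measure ℝ)]
    have m : MeasurableEmbedding fun x : ℝ => -x :=
      (Homeomorph.neg ℝ).measurableEmbedding
    rw [m.integrableOn_map_iff]
    have hcomp : (g ∘ fun x : ℝ => -x) = g := by
      funext t; simp [hg_def, abs_neg]
    rw [hcomp]
    simp only [neg_preimage, neg_Iic, neg_zero]
    exact (integrableOn_Ici_iff_integrableOn_Ioi).mpr hIoi
  have h4 := hIic.union hIoi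
  rwa [Iic_union_Ioi, integrableOn_univ] at h4

/-- Bound for the integral `∫_{ℝ^d} max(1,‖x‖)^{-2ℓ} ω(πLx₁) dx`
(with `‖·‖` the sup norm): it is `≤ c(C⁻¹ + C²L⁻²)` for all `C ≥ 1`, and
consequently `≤ c' L^{-2/3}` for `L ≥ 1`. -/
theorem fejer_integral_bound (d ℓ : ℕ) (hd : 1 ≤ d) (hℓ : d + 1 ≤ 2 * ℓ) :
    (∃ c : ℝ, 0 < c ∧ ∀ L : ℝ, 0 < L → ∀ C : ℝ, 1 ≤ C →
      (∫ x : Fin d → ℝ,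
          (max 1 ‖x‖) ^ (-(2 * ℓ : ℤ)) * fejerKernel (Real.pi * L * x ⟨0, hd⟩))
        ≤ c * (C⁻¹ + C ^ 2 * (L ^ 2)⁻¹)) ∧
    (∃ c' : ℝ, 0 < c' ∧ ∀ L : ℝ, 1 ≤ L →
      (∫ x : Fin d → ℝ,
          (max 1 ‖x‖) ^ (-(2 * ℓ : ℤ)) * fejerKernel (Real.pi * L * x ⟨0, hd⟩))
        ≤ c' * L ^ (-(2 / 3) : ℝ)) := by
  have hd0 : (0:ℝ) < d := by exact_mod_cast hd
  set i0 : Fin d := ⟨0, hd⟩ with hi0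
  set p : ℝ := ((d:ℝ) + 1) / d with hp_def
  have hp1 : 1 < p := by rw [hp_def, lt_div_iff₀ hd0]; linarith
  set g : ℝ → ℝ := fun t => (max 1 |t|) ^ (-p) with hg_def
  have hg_nonneg : ∀ t, 0 ≤ g t := fun t =>
    Real.rpow_nonneg (le_trans zero_le_one (le_max_left _ _)) _
  have hg_le_one : ∀ t, g t ≤ 1 := fun t =>
    Real.rpow_le_one_of_one_le_of_nonpos (le_max_left _ _) (by linarith)
  have hg_int : Integrable g := integrable_max_one_abs_rpow hp1
  set I : ℝ := ∫ t, g t with hI_def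
  have hI0 : 0 ≤ I := integral_nonneg hg_nonneg
  -- key pointwise bound
  have key : ∀ x : Fin d → ℝ, ((max 1 ‖x‖) ^ (-(2 * ℓ : ℤ)) : ℝ) ≤ ∏ i, g (x i) := by
    intro x
    set M : ℝ := max 1 ‖x‖ with hM
    have hM1 : 1 ≤ M := le_max_left _ _
    have hM0 : 0 < M := lt_of_lt_of_le one_pos hM1
    have hprod_le : ∏ i : Fin d, max 1 |x i| ≤ M ^ d := by
      calc ∏ i : Fin d, max 1 |x i| ≤ ∏ _i : Fin d, M := by
            apply Finset.prod_le_prod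
            · intro i _; positivity
            · intro i _
              refine max_le hM1 ?_
              have h := norm_le_pi_norm x i
              rw [Real.norm_eq_abs] at h
              exact h.trans (le_max_right _ _)
        _ = M ^ d := by rw [Finset.prod_const, Finset.card_univ, Fintype.card_fin]
    rw [← Real.rpow_intCast M (-(2 * ℓ : ℤ))]
    calc M ^ (((-(2 * ℓ : ℤ) : ℤ)) : ℝ) ≤ M ^ (-((d:ℝ)+1)) := by
          apply Real.rpow_le_rpow_of_exponent_le hM1
          have hl' : (d:ℝ) + 1 ≤ 2*(ℓ:ℝ) := by exact_mod_cast hℓ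
          push_cast; linarith
      _ = (M ^ (d:ℝ)) ^ (-p) := by
          rw [← Real.rpow_mul (le_of_lt hM0)]
          congr 1
          rw [hp_def]; field_simp
      _ ≤ (∏ i, max 1 |x i|) ^ (-p) := by
          apply Real.rpow_le_rpow_of_nonpos
          · positivity
          · rw [Real.rpow_natCast]; exact hprod_le
          · linarith
      _ = ∏ i, g (x i) :=
          (Real.finset_prod_rpow _ _ (fun i _ => by positivity) _).symm
  -- main estimate
  have part1 : ∀ L : ℝ, 0 < L → ∀ C : ℝ, 1 ≤ C →
      (∫ x : Fin d → ℝ,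
          (max 1 ‖x‖) ^ (-(2 * ℓ : ℤ)) * fejerKernel (Real.pi * L * x i0))
        ≤ (2 * I^(d-1) + I^d + 1) * (C⁻¹ + C ^ 2 * (L ^ 2)⁻¹) := by
    intro L hL C hC
    have hC0 : (0:ℝ) < C := lt_of_lt_of_le one_pos hC
    set q : ℝ := C^2 * (L^2)⁻¹ with hq_def
    have hq0 : 0 ≤ q := by positivity
    set h0 : ℝ → ℝ := (Icc (-C⁻¹) C⁻¹).indicator g with hh0
    set H : Fin d → ℝ → ℝ := fun i => if i = i0 then h0 else g with hH
    have hH_int : ∀ i, Integrable (H i) := by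
      intro i
      simp only [hH]
      split
      · exact hg_int.indicator measurableSet_Icc
      · exact hg_int
    have ptwise : ∀ x : Fin d → ℝ,
        (max 1 ‖x‖) ^ (-(2 * ℓ : ℤ)) * fejerKernel (Real.pi * L * x i0)
          ≤ (∏ i, H i (x i)) + q * ∏ i, g (x i) := by
      intro x
      have hprod_nonneg : 0 ≤ ∏ i, g (x i) := Finset.prod_nonneg fun i _ => hg_nonneg _
      by_cases ht : |x i0| ≤ C⁻¹
      · have hHeq : (∏ i, H i (x i)) = ∏ i, g (x i) := by
          apply Finset.prod_congr rfl
          intro i _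
          simp only [hH]
          split
          · rename_i hi
            subst hi
            rw [hh0, indicator_of_mem (mem_Icc.mpr (abs_le.mp ht))]
          · rfl
        rw [hHeq]
        have hmm : (max 1 ‖x‖) ^ (-(2 * ℓ : ℤ)) * fejerKernel (Real.pi * L * x i0)
            ≤ (∏ i, g (x i)) * 1 :=
          mul_le_mul (key x) (fejerKernel_le_one _) (fejerKernel_nonneg _) hprod_nonneg
        nlinarith [mul_nonneg hq0 hprod_nonneg]
      · push_neg at ht
        have hCinv0 : (0:ℝ) < C⁻¹ := by positivity
        have ht0 : x i0 ≠ 0 := by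
          intro h; rw [h, abs_zero] at ht; linarith
        have harg : Real.pi * L * x i0 ≠ 0 :=
          mul_ne_zero (mul_ne_zero Real.pi_ne_zero (ne_of_gt hL)) ht0
        have hπ2 : (1:ℝ) ≤ Real.pi^2 := by nlinarith [Real.pi_gt_three]
        have ht2 : (C⁻¹)^2 ≤ (x i0)^2 := by
          rw [← sq_abs (x i0)]
          exact pow_le_pow_left₀ (le_of_lt hCinv0) ht.le 2
        have hlow : L^2 * (C^2)⁻¹ ≤ (Real.pi*L*(x i0))^2 := by
          have h1 : (Real.pi*L*(x i0))^2 = Real.pi^2*(L^2*(x i0)^2) := by ring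
          rw [h1, ← inv_pow]
          calc L^2*(C⁻¹)^2 ≤ L^2*(x i0)^2 :=
                mul_le_mul_of_nonneg_left ht2 (sq_nonneg L)
            _ = 1 * (L^2*(x i0)^2) := (one_mul _).symm
            _ ≤ Real.pi^2 * (L^2*(x i0)^2) :=
                mul_le_mul_of_nonneg_right hπ2 (by positivity)
        have hω : fejerKernel (Real.pi * L * x i0) ≤ q := by
          refine (fejerKernel_le_inv_sq harg).trans ?_
          have hpos : (0:ℝ) < L^2 * (C^2)⁻¹ := by positivity
          calc 1/(Real.pi*L*x i0)^2 ≤ 1/(L^2*(C^2)⁻¹) :=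
                one_div_le_one_div_of_le hpos hlow
            _ = q := by rw [hq_def]; field_simp
        have hzero : (∏ i, H i (x i)) = 0 := by
          apply Finset.prod_eq_zero (Finset.mem_univ i0)
          simp only [hH, if_pos rfl]
          rw [hh0]
          apply indicator_of_notMem
          rw [mem_Icc]
          intro hmem
          exact absurd (abs_le.mpr hmem) (not_le.mpr ht)
        rw [hzero, zero_add]
        have hmm : (max 1 ‖x‖) ^ (-(2 * ℓ : ℤ)) * fejerKernel (Real.pi * L * x i0)
            ≤ (∏ i, g (x i)) * q :=
          mul_le_mul (key x) hω (fejerKernel_nonneg _) hprod_nonneg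
        linarith [hmm, (mul_comm (∏ i, g (x i)) q)]
    have P1 : Integrable (fun x : Fin d → ℝ => ∏ i, H i (x i)) :=
      Integrable.fintype_prod hH_int
    have P2 : Integrable (fun x : Fin d → ℝ => ∏ i, g (x i)) :=
      Integrable.fintype_prod fun _ => hg_int
    have PG : Integrable (fun x : Fin d → ℝ =>
        (∏ i, H i (x i)) + q * ∏ i, g (x i)) := P1.add (P2.const_mul q)
    have hmono := integral_mono_of_nonneg
      (Filter.Eventually.of_forall fun x =>
        mul_nonneg (by positivity) (fejerKernel_nonneg _))
      PG (Filter.Eventually.of_forall ptwise)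
    rw [integral_add P1 (P2.const_mul q), integral_const_mul,
        integral_fintype_prod_volume_eq_prod (ι := Fin d) H,
        integral_fintype_prod_volume_eq_pow (ι := Fin d) g, Fintype.card_fin] at hmono
    have hprodH : (∏ i, ∫ t, H i t) = (∫ t, h0 t) * I ^ (d - 1) := by
      have h1 : (∏ i, ∫ t, H i t)
          = (∫ t, H i0 t) * ∏ i ∈ Finset.univ.erase i0, ∫ t, H i t :=
        (Finset.mul_prod_erase Finset.univ _ (Finset.mem_univ i0)).symm
      have h2 : ∀ i ∈ Finset.univ.erase i0, (∫ t, H i t) = I := by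
        intro i hi
        simp only [hH, if_neg (Finset.mem_erase.mp hi).1]; rfl
      rw [h1, Finset.prod_congr rfl h2, Finset.prod_const,
          Finset.card_erase_of_mem (Finset.mem_univ i0), Finset.card_univ,
          Fintype.card_fin]
      congr 1
    rw [hprodH] at hmono
    have hJ0 : 0 ≤ ∫ t, h0 t :=
      integral_nonneg fun t => indicator_nonneg (fun s _ => hg_nonneg s) t
    have hJle : (∫ t, h0 t) ≤ 2 * C⁻¹ := by
      have hCinv : (0:ℝ) ≤ C⁻¹ := inv_nonneg.mpr hC0.le
      rw [hh0, integral_indicator measurableSet_Icc]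
      calc ∫ t in Icc (-C⁻¹) C⁻¹, g t ≤ ∫ t in Icc (-C⁻¹) C⁻¹, (1:ℝ) := by
            apply setIntegral_mono_on hg_int.integrableOn ?_ measurableSet_Icc
              (fun t _ => hg_le_one t)
            exact (integrableOn_const_iff).mpr
              (Or.inr (by rw [Real.volume_Icc]; exact ENNReal.ofReal_lt_top))
        _ = 2 * C⁻¹ := by
            rw [setIntegral_const, Real.volume_real_Icc, smul_eq_mul, mul_one,
                max_eq_left (by linarith)]
            ring
    refine hmono.trans ?_
    have hIk1 : 0 ≤ I^(d-1) := pow_nonneg hI0 _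
    have hIk2 : 0 ≤ I^d := pow_nonneg hI0 _
    have hCinv : (0:ℝ) ≤ C⁻¹ := inv_nonneg.mpr hC0.le
    nlinarith [mul_le_mul_of_nonneg_right hJle hIk1, mul_nonneg hCinv hIk2,
               mul_nonneg hq0 hIk1, mul_nonneg hq0 hIk2, mul_nonneg hCinv hIk1]
  constructor
  · exact ⟨2 * I^(d-1) + I^d + 1, by positivity, part1⟩
  · refine ⟨2 * (2 * I^(d-1) + I^d + 1), by positivity, ?_⟩
    intro L hL
    have hL0 : (0:ℝ) < L := lt_of_lt_of_le one_pos hL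
    have hC1 : 1 ≤ L ^ ((2:ℝ)/3) := by
      calc (1:ℝ) = L ^ (0:ℝ) := (Real.rpow_zero L).symm
        _ ≤ L ^ ((2:ℝ)/3) := Real.rpow_le_rpow_of_exponent_le hL (by norm_num)
    have hmain := part1 L hL0 _ hC1
    refine hmain.trans ?_
    have h1 : (L ^ ((2:ℝ)/3))⁻¹ = L ^ (-(2/3) : ℝ) := by
      rw [← Real.rpow_neg hL0.le]
    have h2 : (L ^ ((2:ℝ)/3))^2 * (L^2)⁻¹ = L ^ (-(2/3):ℝ) := by
      rw [← Real.rpow_natCast (L ^ ((2:ℝ)/3)) 2, ← Real.rpow_mul hL0.le,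
          ← Real.rpow_natCast L 2, ← Real.rpow_neg hL0.le, ← Real.rpow_add hL0]
      norm_num
    rw [h1, h2]
    apply le_of_eq
    ring
end

section
/- Let N ≥ 1, let s, t ∈ ℝ^N have nonnegative entries, and let I, J ⊆ {1, …, N}. Define s′ ∈ ℝ^N by s′_i = s_i for i ∈ I and s′_i = 0 for i ∉ I, and define t′ ∈ ℝ^N by t′_j = t_j for j ∈ J and t′_j = 0 for j ∉ J. Suppose there is β ∈ [0, 1) such that s_i ≤ β ‖s − t‖ for every i ∉ I and t_j ≤ β ‖s − t‖ for every j ∉ J. Then ‖s′ − t′‖ ≥ ‖s − t‖. -/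
/-- If the coordinates of `s` outside `I` and of `t` outside `J` are all at most
`β‖s-t‖` with `β < 1`, then truncating `s` to `I` and `t` to `J` does not decrease
the sup-norm distance. -/
theorem truncated_sup_distance_ge (N : ℕ) (hN : 1 ≤ N) (s t : Fin N → ℝ)
    (hs : ∀ i, 0 ≤ s i) (ht : ∀ i, 0 ≤ t i)
    (I J : Finset (Fin N)) (β : ℝ) (hβ0 : 0 ≤ β) (hβ1 : β < 1)
    (hsI : ∀ i, i ∉ I → s i ≤ β * ‖s - t‖)
    (htJ : ∀ j, j ∉ J → t j ≤ β * ‖s - t‖) :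
    ‖s - t‖ ≤
      ‖(fun i => if i ∈ I then s i else 0) - (fun j => if j ∈ J then t j else 0)‖ := by
  rcases eq_or_lt_of_le (norm_nonneg (s - t)) with h0 | hpos
  · rw [← h0]; exact norm_nonneg _
  obtain ⟨i, -, hi⟩ := Finset.exists_max_image (Finset.univ : Finset (Fin N))
    (fun j => ‖(s - t) j‖) ⟨⟨0, by omega⟩, Finset.mem_univ _⟩
  have hDi : ‖s - t‖ = ‖(s - t) i‖ := le_antisymm
    ((pi_norm_le_iff_of_nonneg (norm_nonneg _)).2 fun j => hi j (Finset.mem_univ j))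
    (norm_le_pi_norm _ i)
  have hβD : β * ‖s - t‖ < ‖s - t‖ := by nlinarith
  have habs : |s i - t i| = ‖s - t‖ := by
    rw [hDi]; simp [Real.norm_eq_abs]
  have key : ‖s - t‖ ≤
      ‖((fun i => if i ∈ I then s i else 0) - (fun j => if j ∈ J then t j else 0)) i‖ := by
    simp only [Pi.sub_apply, Real.norm_eq_abs]
    by_cases hI : i ∈ I <;> by_cases hJ : i ∈ J <;> simp [hI, hJ]
    · rw [← habs]
    · have h1 := htJ i hJ
      have h2 := ht i
      have h3 := hs i
      rcases abs_cases (s i - t i) with ⟨he, _⟩ | ⟨he, _⟩ <;>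
        rcases abs_cases (s i) with ⟨he2, _⟩ | ⟨he2, _⟩ <;> linarith
    · have h1 := hsI i hI
      have h2 := hs i
      have h3 := ht i
      rcases abs_cases (s i - t i) with ⟨he, _⟩ | ⟨he, _⟩ <;>
        rcases abs_cases (t i) with ⟨he2, _⟩ | ⟨he2, _⟩ <;> linarith
    · have h1 := hsI i hI
      have h2 := htJ i hJ
      have h3 := hs i
      have h4 := ht i
      rcases abs_cases (s i - t i) with ⟨he, _⟩ | ⟨he, _⟩ <;> linarith
  exact key.trans (norm_le_pi_norm _ i)
end
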